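/- Let α be an irrational real number. For every ε > 0 and every positive integer N, there exists m_0 such that for all m ≥ m_0, all nonzero integer vectors h with ||h||_∞ ≤ N, and all β, γ ∈ ℝ: |(1/m) ∑_{j=1}^m e((∑_k h_k a_k)(j^2 + βj + γ)/p)| < ε, provided each nonzero integer combination ∑_k h_k a_k / p is irrational. -/

import Mathlib

open Finset Complex

noncomputable def Ee (t : ℝ) : ℂ := Complex.exp (2 * Real.pi * Complex.I * t)

lemma Ee_add (s t : ℝ) : Ee (s + t) = Ee s * Ee t := by
  rw [Ee, Ee, Ee, ← Complex.exp_add]; congr 1; push_cast; ring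

lemma abs_Ee (t : ℝ) : ‖Ee t‖ = 1 := by
  rw [Ee, Complex.norm_exp]; simp

lemma conj_Ee (t : ℝ) : (starRingEnd ℂ) (Ee t) = Ee (-t) := by
  rw [Ee, Ee, ← Complex.exp_conj]; congr 1
  simp only [map_mul, Complex.conj_I, Complex.conj_ofReal, map_ofNat]
  push_cast; ring

lemma Ee_ne_one {x : ℝ} (hx : Irrational x) : Ee x ≠ 1 := by
  intro h
  rw [Ee, Complex.exp_eq_one_iff] at h
  obtain ⟨n, hn⟩ := h
  have h2 : (2 * (Real.pi : ℂ) * Complex.I) ≠ 0 := by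
    refine mul_ne_zero (mul_ne_zero (by norm_num) ?_) Complex.I_ne_zero
    exact Complex.ofReal_ne_zero.mpr Real.pi_ne_zero
  have : (x : ℂ) = n := by
    have hn' : (2 * (Real.pi : ℂ) * Complex.I) * x = (2 * (Real.pi : ℂ) * Complex.I) * n := by
      linear_combination hn
    exact mul_left_cancel₀ h2 hn' 
  have : x = (n : ℝ) := by exact_mod_cast this
  exact hx.ne_int n this

lemma Ee_pow (x : ℝ) (j : ℕ) : Ee (x * j) = (Ee x) ^ j := by
  rw [Ee, Ee, ← Complex.exp_nat_mul]; congr 1; push_cast; ring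

lemma geo_bound (x c : ℝ) (m : ℕ) (hx : Ee x ≠ 1) :
    ‖∑ j ∈ Finset.Ioc 0 m, Ee (x * j + c)‖ ≤ 2 / ‖1 - Ee x‖ := by
  have key : (∑ j ∈ Finset.Ioc 0 m, Ee (x * j + c))
      = Ee c * (Ee x * ((Ee x ^ m - 1) / (Ee x - 1))) := by
    have h1 : ∀ j : ℕ, Ee (x * j + c) = Ee c * (Ee x) ^ j := by
      intro j; rw [show x * j + c = c + x * j by ring, Ee_add, Ee_pow]
    rw [Finset.sum_congr rfl fun j _ => h1 j, ← Finset.mul_sum]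
    congr 1
    rw [← Finset.Icc_add_one_left_eq_Ioc, zero_add, show Finset.Icc 1 m = Finset.Ico 1 (m+1) by
      rw [Finset.Ico_add_one_right_eq_Icc], Finset.sum_Ico_eq_sum_range]
    simp only [Nat.add_sub_cancel]
    rw [show (∑ i ∈ Finset.range m, Ee x ^ (1 + i)) = Ee x * ∑ i ∈ Finset.range m, Ee x ^ i by
      rw [Finset.mul_sum]; exact Finset.sum_congr rfl fun i _ => by rw [pow_add, pow_one],
      geom_sum_eq hx]
  rw [key, norm_mul, norm_mul, abs_Ee, abs_Ee, one_mul, one_mul, norm_div]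
  rw [show ‖1 - Ee x‖ = ‖Ee x - 1‖ from norm_sub_rev _ _]
  have hd : 0 < ‖Ee x - 1‖ := by
    rw [norm_pos_iff]; exact sub_ne_zero.mpr hx
  have hnum : ‖Ee x ^ m - 1‖ ≤ 2 := by
    have := norm_sub_le_norm_sub_add_norm_sub (Ee x ^ m) 0 1
    simp only [sub_zero, zero_sub, norm_neg, norm_one, norm_pow, abs_Ee, one_pow] at this
    linarith
  gcongr

lemma shift_bound (f : ℕ → ℂ) (hf : ∀ j, ‖f j‖ ≤ 1) (m d : ℕ) :
    ‖∑ j ∈ Finset.Ioc 0 m, f (j + d) - ∑ j ∈ Finset.Ioc 0 m, f j‖ ≤ 2 * d := by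
  have h1 : (∑ j ∈ Finset.Ioc 0 m, f (j + d)) = ∑ j ∈ Finset.Ioc d (m + d), f j := by
    rw [show Finset.Ioc d (m + d) = (Finset.Ioc 0 m).map (addRightEmbedding d) by
      rw [Finset.map_add_right_Ioc, zero_add], Finset.sum_map]
    rfl
  have h2 : (∑ j ∈ Finset.Ioc 0 d, f j) + ∑ j ∈ Finset.Ioc d (m + d), f j
      = ∑ j ∈ Finset.Ioc 0 (m + d), f j :=
    Finset.sum_Ioc_consecutive f (Nat.zero_le d) (Nat.le_add_left d m)
  have h3 : (∑ j ∈ Finset.Ioc 0 m, f j) + ∑ j ∈ Finset.Ioc m (m + d), f j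
      = ∑ j ∈ Finset.Ioc 0 (m + d), f j :=
    Finset.sum_Ioc_consecutive f (Nat.zero_le m) (Nat.le_add_right m d)
  have hkey : (∑ j ∈ Finset.Ioc 0 m, f (j + d)) - ∑ j ∈ Finset.Ioc 0 m, f j
      = (∑ j ∈ Finset.Ioc m (m + d), f j) - ∑ j ∈ Finset.Ioc 0 d, f j := by
    rw [h1]; linear_combination h2 - h3
  rw [hkey]
  have hb : ∀ (s : Finset ℕ), ‖∑ j ∈ s, f j‖ ≤ s.card := by
    intro s
    calc ‖∑ j ∈ s, f j‖ ≤ ∑ j ∈ s, ‖f j‖ := by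
          exact norm_sum_le s f
      _ ≤ ∑ j ∈ s, 1 := Finset.sum_le_sum fun j _ => hf j
      _ = s.card := by simp
  calc ‖_‖ ≤ ‖∑ j ∈ Finset.Ioc m (m + d), f j‖
        + ‖∑ j ∈ Finset.Ioc 0 d, f j‖ := by
          exact
            norm_sub_le (∑ j ∈ Finset.Ioc m (m + d), f j) (∑ j ∈ Finset.Ioc 0 d, f j)
    _ ≤ (Finset.Ioc m (m + d)).card + (Finset.Ioc 0 d).card := by
        gcongr <;> exact hb _
    _ ≤ 2 * d := by rw [Nat.card_Ioc, Nat.card_Ioc]; simp; ring_nf; simp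

lemma weyl_main (θ : ℝ) (hθ : Irrational θ) {ε : ℝ} (hε : 0 < ε) :
    ∃ m₀ : ℕ, ∀ m : ℕ, m₀ ≤ m → ∀ β γ : ℝ,
      ‖(1 / (m : ℂ)) * ∑ j ∈ Finset.Ioc 0 m,
        Ee (θ * ((j : ℝ) ^ 2 + β * (j : ℝ) + γ))‖ < ε := by
  obtain ⟨H, hH1, hHε⟩ : ∃ H : ℕ, 1 ≤ H ∧ 1 / (H : ℝ) ≤ ε ^ 2 / 8 := by
    refine ⟨max 1 ⌈8 / ε ^ 2⌉₊, le_max_left _ _, ?_⟩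
    have hHpos : (0:ℝ) < (max 1 ⌈8 / ε ^ 2⌉₊ : ℕ) := by
      exact_mod_cast Nat.lt_of_lt_of_le Nat.zero_lt_one (le_max_left _ _)
    have h8 : (8:ℝ) / ε ^ 2 ≤ (max 1 ⌈8 / ε ^ 2⌉₊ : ℕ) :=
      le_trans (Nat.le_ceil _) (Nat.cast_le.mpr (le_max_right 1 ⌈8 / ε ^ 2⌉₊))
    rw [div_le_iff₀ (by positivity)] at h8
    rw [div_le_div_iff₀ hHpos (by norm_num)]
    nlinarith
  have hHpos : (0:ℝ) < H := by exact_mod_cast hH1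
  set C := ∑ d ∈ Finset.range H, ∑ d' ∈ Finset.range H,
      (if d = d' then (0:ℝ) else 2 / ‖1 - Ee (2 * θ * ((d:ℝ) - (d':ℝ)))‖) with hC
  have hC0 : 0 ≤ C := by
    refine Finset.sum_nonneg fun d _ => Finset.sum_nonneg fun d' _ => ?_
    split_ifs <;> positivity
  refine ⟨⌈8 * C / (ε ^ 2 * (H:ℝ) ^ 2)⌉₊ + ⌈4 * (H:ℝ) / ε⌉₊ + 1, fun m hm β γ => ?_⟩
  have hm1 : 1 ≤ m := le_trans (by omega) hm
  have hmR : (0:ℝ) < m := by exact_mod_cast hm1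
  set f : ℕ → ℂ := fun j => Ee (θ * ((j:ℝ) ^ 2 + β * (j:ℝ) + γ)) with hfdef
  have hf1 : ∀ j, ‖f j‖ = 1 := fun j => abs_Ee _
  set S := ∑ j ∈ Finset.Ioc 0 m, f j with hSdef
  set g : ℕ → ℂ := fun j => ∑ d ∈ Finset.range H, f (j + d) with hgdef
  set T := ∑ j ∈ Finset.Ioc 0 m, g j with hTdef
  -- Claim A
  have claimA : (H:ℝ) * ‖S‖ ≤ ‖T‖ + 2 * (H:ℝ) ^ 2 := by
    have hTcomm : T = ∑ d ∈ Finset.range H, ∑ j ∈ Finset.Ioc 0 m, f (j + d) := by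
      rw [hTdef, hgdef]; exact Finset.sum_comm
    have hdiff : ‖(H:ℂ) * S - T‖ ≤ 2 * (H:ℝ) ^ 2 := by
      have heq : (H:ℂ) * S - T
          = ∑ d ∈ Finset.range H, (S - ∑ j ∈ Finset.Ioc 0 m, f (j + d)) := by
        rw [Finset.sum_sub_distrib, Finset.sum_const, Finset.card_range, nsmul_eq_mul, hTcomm]
      rw [heq]
      calc ‖∑ d ∈ Finset.range H, (S - ∑ j ∈ Finset.Ioc 0 m, f (j + d))‖
          ≤ ∑ d ∈ Finset.range H,
              ‖S - ∑ j ∈ Finset.Ioc 0 m, f (j + d)‖ := by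
            exact
              norm_sum_le (Finset.range H) (fun d => S - ∑ j ∈ Finset.Ioc 0 m, f (j + d))
        _ ≤ ∑ d ∈ Finset.range H, 2 * (H:ℝ) := by
            refine Finset.sum_le_sum fun d hd => ?_
            rw [norm_sub_rev]
            refine le_trans (shift_bound f (fun j => le_of_eq (hf1 j)) m d) ?_
            have : (d:ℝ) ≤ (H:ℝ) := by
              exact_mod_cast le_of_lt (Finset.mem_range.mp hd)
            linarith
        _ = 2 * (H:ℝ) ^ 2 := by rw [Finset.sum_const, Finset.card_range, nsmul_eq_mul]; ring
    have habs : ‖(H:ℂ) * S‖ = (H:ℝ) * ‖S‖ := by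
      rw [norm_mul, Complex.norm_natCast]
    calc (H:ℝ) * ‖S‖ = ‖(H:ℂ) * S‖ := habs.symm
      _ = ‖T + ((H:ℂ) * S - T)‖ := by ring_nf
      _ ≤ ‖T‖ + ‖(H:ℂ) * S - T‖ := by
          exact norm_add_le T ((H:ℂ) * S - T)
      _ ≤ ‖T‖ + 2 * (H:ℝ) ^ 2 := by linarith
  -- Claim B
  have hsum2 : ∑ j ∈ Finset.Ioc 0 m, (‖g j‖) ^ 2 ≤ (H:ℝ) * m + C := by
    have hterm : ∀ j, (‖g j‖) ^ 2 = (g j * (starRingEnd ℂ) (g j)).re := by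
      intro j
      rw [Complex.mul_conj, Complex.ofReal_re, Complex.normSq_eq_norm_sq]
    have hexp : ∀ j, g j * (starRingEnd ℂ) (g j)
        = ∑ d ∈ Finset.range H, ∑ d' ∈ Finset.range H,
            f (j + d) * (starRingEnd ℂ) (f (j + d')) := by
      intro j
      rw [hgdef]
      simp only [map_sum]
      rw [Finset.sum_mul_sum]
    have hre : ∑ j ∈ Finset.Ioc 0 m, (‖g j‖) ^ 2
        = ∑ d ∈ Finset.range H, ∑ d' ∈ Finset.range H,
            (∑ j ∈ Finset.Ioc 0 m, f (j + d) * (starRingEnd ℂ) (f (j + d'))).re := by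
      have : ∑ j ∈ Finset.Ioc 0 m, (‖g j‖) ^ 2
          = (∑ d ∈ Finset.range H, ∑ d' ∈ Finset.range H,
              ∑ j ∈ Finset.Ioc 0 m, f (j + d) * (starRingEnd ℂ) (f (j + d'))).re := by
        rw [Finset.sum_congr rfl fun j _ => hterm j, ← Complex.re_sum]
        congr 1
        rw [Finset.sum_congr rfl fun j _ => hexp j]
        rw [Finset.sum_comm]
        refine Finset.sum_congr rfl fun d _ => Finset.sum_comm
      rw [this, Complex.re_sum]
      exact Finset.sum_congr rfl fun d _ => Complex.re_sum _ _
    rw [hre]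
    have hbound : ∀ d ∈ Finset.range H, ∀ d' ∈ Finset.range H,
        (∑ j ∈ Finset.Ioc 0 m, f (j + d) * (starRingEnd ℂ) (f (j + d'))).re
          ≤ (if d = d' then (m:ℝ) else 2 / ‖1 - Ee (2 * θ * ((d:ℝ) - (d':ℝ)))‖) := by
      intro d _ d' _
      by_cases hdd : d = d'
      · subst hdd
        simp only [if_pos rfl]
        have : ∀ j : ℕ, f (j + d) * (starRingEnd ℂ) (f (j + d)) = 1 := by
          intro j
          rw [Complex.mul_conj, Complex.normSq_eq_norm_sq, hf1, one_pow, Complex.ofReal_one]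
        rw [Finset.sum_congr rfl fun j _ => this j, Finset.sum_const, Nat.card_Ioc,
          Nat.sub_zero, nsmul_eq_mul, mul_one]
        simp
      · rw [if_neg hdd]
        have hx : Irrational (2 * θ * ((d:ℝ) - (d':ℝ))) := by
          have hcast : ((2 * ((d:ℤ) - (d':ℤ)) : ℤ) : ℝ) * θ = 2 * θ * ((d:ℝ) - (d':ℝ)) := by
            push_cast; ring
          rw [← hcast]
          refine hθ.intCast_mul ?_
          have : (d:ℤ) ≠ (d':ℤ) := by exact_mod_cast hdd
          omega
        have heq : ∀ j : ℕ, f (j + d) * (starRingEnd ℂ) (f (j + d'))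
            = Ee ((2 * θ * ((d:ℝ) - (d':ℝ))) * j
                + θ * (((d:ℝ) - d') * ((d:ℝ) + d') + β * ((d:ℝ) - d'))) := by
          intro j
          rw [hfdef]
          simp only
          rw [conj_Ee, ← Ee_add]
          congr 1
          push_cast
          ring
        calc (∑ j ∈ Finset.Ioc 0 m, f (j + d) * (starRingEnd ℂ) (f (j + d'))).re
            ≤ ‖∑ j ∈ Finset.Ioc 0 m, f (j + d) * (starRingEnd ℂ) (f (j + d'))‖ :=
              Complex.re_le_norm _
          _ ≤ 2 / ‖1 - Ee (2 * θ * ((d:ℝ) - (d':ℝ)))‖ := by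
              rw [Finset.sum_congr rfl fun j _ => heq j]
              exact geo_bound _ _ m (Ee_ne_one hx)
    calc ∑ d ∈ Finset.range H, ∑ d' ∈ Finset.range H,
          (∑ j ∈ Finset.Ioc 0 m, f (j + d) * (starRingEnd ℂ) (f (j + d'))).re
        ≤ ∑ d ∈ Finset.range H, ∑ d' ∈ Finset.range H,
            (if d = d' then (m:ℝ) else 2 / ‖1 - Ee (2 * θ * ((d:ℝ) - (d':ℝ)))‖) :=
          Finset.sum_le_sum fun d hd => Finset.sum_le_sum fun d' hd' => hbound d hd d' hd'
      _ = (H:ℝ) * m + C := by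
          have hsplit : ∀ d ∈ Finset.range H,
              (∑ d' ∈ Finset.range H, (if d = d' then (m:ℝ)
                else 2 / ‖1 - Ee (2 * θ * ((d:ℝ) - (d':ℝ)))‖))
              = (m:ℝ) + ∑ d' ∈ Finset.range H, (if d = d' then 0
                else 2 / ‖1 - Ee (2 * θ * ((d:ℝ) - (d':ℝ)))‖) := by
            intro d hd
            have h1 : ∀ d' ∈ Finset.range H,
                (if d = d' then (m:ℝ)
                  else 2 / ‖1 - Ee (2 * θ * ((d:ℝ) - (d':ℝ)))‖)
                = (if d = d' then (m:ℝ) else 0)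
                  + (if d = d' then 0
                    else 2 / ‖1 - Ee (2 * θ * ((d:ℝ) - (d':ℝ)))‖) := by
              intro d' _
              split_ifs <;> ring
            rw [Finset.sum_congr rfl h1, Finset.sum_add_distrib, Finset.sum_ite_eq,
              if_pos hd]
          rw [Finset.sum_congr rfl hsplit, Finset.sum_add_distrib, Finset.sum_const,
            Finset.card_range, nsmul_eq_mul, hC]
  have claimB : (‖T‖) ^ 2 ≤ (m:ℝ) * ((H:ℝ) * m + C) := by
    have habsT : ‖T‖ ≤ ∑ j ∈ Finset.Ioc 0 m, ‖g j‖ := by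
      exact norm_sum_le (Finset.Ioc 0 m) g
    have hCS : (∑ j ∈ Finset.Ioc 0 m, ‖g j‖) ^ 2
        ≤ (m:ℝ) * ∑ j ∈ Finset.Ioc 0 m, (‖g j‖) ^ 2 := by
      have := Finset.sum_mul_sq_le_sq_mul_sq (Finset.Ioc 0 m)
        (fun _ => (1:ℝ)) (fun j => ‖g j‖)
      simpa [Nat.card_Ioc] using this
    calc (‖T‖) ^ 2 ≤ (∑ j ∈ Finset.Ioc 0 m, ‖g j‖) ^ 2 := by
          refine pow_le_pow_left₀ (norm_nonneg _) habsT 2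
      _ ≤ (m:ℝ) * ∑ j ∈ Finset.Ioc 0 m, (‖g j‖) ^ 2 := hCS
      _ ≤ (m:ℝ) * ((H:ℝ) * m + C) := by
          refine mul_le_mul_of_nonneg_left hsum2 (le_of_lt hmR)
  -- numeric finish
  have hgoal : ‖1 / (m:ℂ) * S‖ = ‖S‖ / m := by
    rw [norm_mul, norm_div, norm_one, Complex.norm_natCast, one_div, inv_mul_eq_div]
  set x := ‖T‖ / ((H:ℝ) * m) with hx
  have hHm : (0:ℝ) < (H:ℝ) * m := by positivity
  have hx2 : x ^ 2 ≤ 1 / (H:ℝ) + C / ((H:ℝ) ^ 2 * m) := by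
    rw [hx, div_pow, div_le_iff₀ (by positivity)]
    have hrw : (1 / (H:ℝ) + C / ((H:ℝ) ^ 2 * m)) * ((H:ℝ) * m) ^ 2
        = (m:ℝ) * ((H:ℝ) * m + C) := by
      field_simp
    rw [hrw]
    exact claimB
  have hC2 : C / ((H:ℝ) ^ 2 * m) ≤ ε ^ 2 / 8 := by
    have hmge : 8 * C / (ε ^ 2 * (H:ℝ) ^ 2) ≤ (m:ℝ) := by
      refine le_trans (Nat.le_ceil _) ?_
      exact Nat.cast_le.mpr (by omega)
    rw [div_le_iff₀ (by positivity)] at hmge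
    rw [div_le_iff₀ (by positivity)]
    nlinarith [hmge]
  have hxle : x ≤ ε / 2 := by
    refine le_of_pow_le_pow_left₀ two_ne_zero (by positivity) ?_
    calc x ^ 2 ≤ 1 / (H:ℝ) + C / ((H:ℝ) ^ 2 * m) := hx2
      _ ≤ ε ^ 2 / 8 + ε ^ 2 / 8 := add_le_add hHε hC2
      _ = (ε / 2) ^ 2 := by ring
  have h2H : 2 * (H:ℝ) / m < ε / 2 := by
    have hmgt : 4 * (H:ℝ) / ε < (m:ℝ) := by
      have h1 : (4 * (H:ℝ) / ε) ≤ (⌈4 * (H:ℝ) / ε⌉₊ : ℝ) := Nat.le_ceil _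
      have h2 : ((⌈4 * (H:ℝ) / ε⌉₊ : ℕ) : ℝ) + 1 ≤ (m:ℝ) := by
        exact_mod_cast Nat.cast_le.mpr (by omega : ⌈4 * (H:ℝ) / ε⌉₊ + 1 ≤ m)
      linarith
    rw [div_lt_iff₀ hε] at hmgt
    rw [div_lt_iff₀ hmR]
    nlinarith [hmgt]
  have hfin : ‖S‖ / m ≤ x + 2 * (H:ℝ) / m := by
    have e1 : ‖S‖ / m = ((H:ℝ) * ‖S‖) / ((H:ℝ) * m) := by
      rw [mul_div_mul_left _ _ (ne_of_gt hHpos)]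
    have e2 : x + 2 * (H:ℝ) / m = (‖T‖ + 2 * (H:ℝ) ^ 2) / ((H:ℝ) * m) := by
      rw [hx]
      field_simp
    rw [e1, e2]
    gcongr
  rw [hgoal]
  calc ‖S‖ / m ≤ x + 2 * (H:ℝ) / m := hfin
    _ < ε / 2 + ε / 2 := add_lt_add_of_le_of_lt hxle h2H
    _ = ε := by ring


/-- Uniform Weyl estimate over the finitely many h with ‖h‖_∞ ≤ N and over β, γ:
provided every nonzero integer combination ∑_k h_k a_k / p is irrational, for every
ε > 0 and N ≥ 1 there is m₀ such that for m ≥ m₀, all nonzero h with ‖h‖_∞ ≤ N and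
all β, γ, |(1/m) ∑_{j=1}^m e((∑_k h_k a_k)(j² + βj + γ)/p)| < ε. -/
theorem stmt_14 (r : ℕ) (a : Fin r → ℝ) (p : ℝ) (α : ℝ) (hα : Irrational α)
    (hirr : ∀ h : Fin r → ℤ, h ≠ 0 → Irrational ((∑ k, (h k : ℝ) * a k) / p)) :
    ∀ ε : ℝ, 0 < ε → ∀ N : ℕ, 0 < N → ∃ m₀ : ℕ, ∀ m : ℕ, m₀ ≤ m →
      ∀ h : Fin r → ℤ, h ≠ 0 → (∀ k, |h k| ≤ (N : ℤ)) → ∀ β γ : ℝ,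
        ‖(1 / (m : ℂ)) * ∑ j ∈ Finset.Icc 1 m,
          Complex.exp (2 * Real.pi * Complex.I *
            ((∑ k, (h k : ℝ) * a k) * ((j : ℝ) ^ 2 + β * (j : ℝ) + γ) / p))‖ < ε := by
  intro ε hε N _hN
  classical
  have key : ∀ h : Fin r → ℤ, h ≠ 0 → ∃ m₀ : ℕ, ∀ m : ℕ, m₀ ≤ m → ∀ β γ : ℝ,
      ‖(1 / (m : ℂ)) * ∑ j ∈ Finset.Ioc 0 m,
        Ee (((∑ k, (h k : ℝ) * a k) / p) * ((j : ℝ) ^ 2 + β * (j : ℝ) + γ))‖ < ε :=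
    fun h hh => weyl_main _ (hirr h hh) hε
  set F : Finset (Fin r → ℤ) := Finset.Icc (fun _ => -(N:ℤ)) (fun _ => (N:ℤ)) with hF
  set gfun : (Fin r → ℤ) → ℕ :=
    fun h => if hh : h = 0 then 0 else (key h hh).choose with hgfun
  refine ⟨F.sup gfun, fun m hm h hh hbd β γ => ?_⟩
  have hmem : h ∈ F := by
    rw [hF, Finset.mem_Icc]
    constructor <;> intro k
    · have := (abs_le.mp (hbd k)).1; simpa using this
    · exact (abs_le.mp (hbd k)).2
  have hle : gfun h ≤ F.sup gfun := Finset.le_sup hmem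
  have hgh : gfun h = (key h hh).choose := by rw [hgfun]; exact dif_neg hh
  have hspec := (key h hh).choose_spec m (by rw [← hgh]; exact le_trans hle hm) β γ
  have hIcc : Finset.Icc 1 m = Finset.Ioc 0 m := Finset.Icc_add_one_left_eq_Ioc 0 m
  have hsum : (∑ j ∈ Finset.Icc 1 m, Complex.exp (2 * Real.pi * Complex.I *
        ((∑ k, (h k : ℝ) * a k) * ((j : ℝ) ^ 2 + β * (j : ℝ) + γ) / p)))
      = ∑ j ∈ Finset.Ioc 0 m,
        Ee (((∑ k, (h k : ℝ) * a k) / p) * ((j : ℝ) ^ 2 + β * (j : ℝ) + γ)) := by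
    rw [hIcc]
    refine Finset.sum_congr rfl fun j _ => ?_
    rw [Ee]
    congr 1
    push_cast
    ring
  rw [hsum]
  exact hspec
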